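/- Let g = ⊕_{p ≥ -1} g^p be a transitive nonlinear irreducible ℤ-graded finite-dimensional complex Lie algebra of depth 1, and set g₀ = ⊕_{p ≥ 0} g^p. Then g₀ is a proper subalgebra of g and the isotropy representation of g₀ on g/g₀ is irreducible: every subspace M with g₀ ⊆ M ⊆ g and [g₀, M] ⊆ M equals g₀ or g. -/

import Mathlib

theorem stmt13 (L : Type*) [LieRing L] [LieAlgebra ℂ L] [FiniteDimensional ℂ L]
    (g : ℤ → Submodule ℂ L)
    (hdirect : DirectSum.IsInternal g)
    (hbracket : ∀ p q : ℤ, ∀ x ∈ g p, ∀ y ∈ g q, ⁅x, y⁆ ∈ g (p + q))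
    (hdepth : ∀ p : ℤ, p < -1 → g p = ⊥)
    (hdepth1 : g (-1) ≠ ⊥)
    (htrans : ∀ p : ℤ, 0 ≤ p → ∀ x ∈ g p, (∀ y ∈ g (-1), ⁅x, y⁆ = 0) → x = 0)
    (hirr : ∀ m : Submodule ℂ L, m ≤ g (-1) →
      (∀ x ∈ g 0, ∀ v ∈ m, ⁅x, v⁆ ∈ m) → m = ⊥ ∨ m = g (-1))
    (hnonlin : g 1 ≠ ⊥) :
    (⨆ p ∈ {q : ℤ | 0 ≤ q}, g p) ≠ ⊤ ∧
    (∀ M : Submodule ℂ L, (⨆ p ∈ {q : ℤ | 0 ≤ q}, g p) ≤ M →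
      (∀ x ∈ (⨆ p ∈ {q : ℤ | 0 ≤ q}, g p), ∀ m ∈ M, ⁅x, m⁆ ∈ M) →
      M = (⨆ p ∈ {q : ℤ | 0 ≤ q}, g p) ∨ M = ⊤) := by
  set G0 : Submodule ℂ L := ⨆ p ∈ {q : ℤ | 0 ≤ q}, g p with hG0def
  have hind := hdirect.submodule_iSupIndep
  have htop := hdirect.submodule_iSup_eq_top
  have hle : ∀ p : ℤ, 0 ≤ p → g p ≤ G0 := fun p hp =>
    le_iSup₂ (f := fun (p : ℤ) (_ : p ∈ {q : ℤ | 0 ≤ q}) => g p) p hp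
  have hG0ne : G0 ≤ ⨆ (j : ℤ) (_ : j ≠ (-1 : ℤ)), g j := by
    apply iSup₂_le
    intro p hp
    exact le_iSup₂ (f := fun (j : ℤ) (_ : j ≠ (-1 : ℤ)) => g j) p (by simp only [Set.mem_setOf_eq] at hp; omega)
  have hdisj : Disjoint (g (-1)) G0 := (hind (-1)).mono_right hG0ne
  have hsup : g (-1) ⊔ G0 = ⊤ := by
    rw [← htop]
    apply le_antisymm
    · apply sup_le (le_iSup g (-1))
      exact hG0ne.trans (iSup₂_le fun j _ => le_iSup g j)
    · apply iSup_le
      intro p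
      rcases lt_trichotomy p (-1) with h | h | h
      · rw [hdepth p h]; exact bot_le
      · rw [h]; exact le_sup_left
      · exact (hle p (by omega)).trans le_sup_right
  constructor
  · intro h
    apply hdepth1
    have : g (-1) ≤ G0 := h ▸ le_top
    exact le_bot_iff.mp (hdisj.le_bot.trans' (le_inf le_rfl this))
  · intro M hM hMinv
    set m : Submodule ℂ L := g (-1) ⊓ M with hmdef
    have hm : m = ⊥ ∨ m = g (-1) := by
      apply hirr m inf_le_left
      intro x hx v hv
      constructor
      · have := hbracket 0 (-1) x hx v hv.1
        simpa using this
      · exact hMinv x (hle 0 le_rfl hx) v hv.2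
    rcases hm with hm | hm
    · left
      apply le_antisymm _ hM
      intro x hx
      have hxtop : x ∈ g (-1) ⊔ G0 := by rw [hsup]; trivial
      obtain ⟨a, ha, b, hb, rfl⟩ := Submodule.mem_sup.mp hxtop
      have haM : a ∈ M := by
        have : a = a + b - b := (add_sub_cancel_right a b).symm
        rw [this]
        exact M.sub_mem hx (hM hb)
      have : a ∈ m := ⟨ha, haM⟩
      rw [hm] at this
      simp only [Submodule.mem_bot] at this
      rw [this, zero_add]
      exact hb
    · right
      rw [eq_top_iff, ← hsup]
      refine sup_le (fun v hv => ?_) hM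
      have : v ∈ m := hm ▸ hv
      exact this.2
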